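/- arXiv:1604.00499 — 7 statements merged into one kernel-verified Lean document; each statement's English description precedes it below -/
import Mathlib

section
/- Let A = ℂ³ act diagonally on H = ℂ³ and let D be a real symmetric 3×3 matrix with zero diagonal and entries D₁₂, D₁₃, D₂₃ all nonzero. Then the spectral distance between pure states δ₁ and δ₂ is d(1,2) = sqrt( (D₁₃² + D₂₃²) / (D₁₂²D₁₃² + D₁₂²D₂₃² + D₂₃²D₁₃²) ). -/
open scoped ENNReal

/-- The Dirac operator of a three-point space: real symmetric with zero diagonal. -/
noncomputable def threePtDirac (D12 D13 D23 : ℝ) : Matrix (Fin 3) (Fin 3) ℂ :=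
  !![0, (D12 : ℂ), (D13 : ℂ); (D12 : ℂ), 0, (D23 : ℂ); (D13 : ℂ), (D23 : ℂ), 0]

noncomputable def Nmat (a b c : ℂ) : Matrix (Fin 3) (Fin 3) ℂ := !![0,a,b;-a,0,c;-b,-c,0]

lemma lagrange (a b c x1 x2 x3 : ℂ) :
    ‖a*x2 + b*x3‖^2 + ‖-a*x1 + c*x3‖^2 + ‖-b*x1 - c*x2‖^2
      + ‖(starRingEnd ℂ) c * x1 - (starRingEnd ℂ) b * x2 + (starRingEnd ℂ) a * x3‖^2
    = (‖a‖^2+‖b‖^2+‖c‖^2) * (‖x1‖^2+‖x2‖^2+‖x3‖^2) := by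
  simp only [Complex.sq_norm, Complex.normSq_apply]
  simp only [Complex.add_re, Complex.add_im, Complex.sub_re, Complex.sub_im, Complex.mul_re,
    Complex.mul_im, Complex.neg_re, Complex.neg_im, Complex.conj_re, Complex.conj_im]
  ring

lemma euclid_apply (A : Matrix (Fin 3) (Fin 3) ℂ) (x : EuclideanSpace ℂ (Fin 3)) (i : Fin 3) :
    (Matrix.toEuclideanCLM (𝕜:=ℂ) A) x i = A.mulVec x i := rfl

lemma norm_sq_eq (x : EuclideanSpace ℂ (Fin 3)) : ‖x‖^2 = ‖x 0‖^2 + ‖x 1‖^2 + ‖x 2‖^2 := by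
  rw [EuclideanSpace.norm_eq, Real.sq_sqrt (by positivity)]
  simp [Fin.sum_univ_three]

lemma Nmat_apply (a b c : ℂ) (x : EuclideanSpace ℂ (Fin 3)) :
    ‖(Matrix.toEuclideanCLM (𝕜:=ℂ) (Nmat a b c)) x‖^2 =
      ‖a * x 1 + b * x 2‖^2 + ‖-a * x 0 + c * x 2‖^2 + ‖-b * x 0 - c * x 1‖^2 := by
  rw [norm_sq_eq]
  simp only [euclid_apply, Nmat, Matrix.mulVec, dotProduct, Fin.sum_univ_three]
  simp [Matrix.cons_val_zero, Matrix.cons_val_one, Matrix.vecHead, Matrix.vecTail]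
  ring_nf

lemma Nmat_norm_le (a b c : ℂ) (h : ‖a‖^2+‖b‖^2+‖c‖^2 ≤ 1) :
    ‖Matrix.toEuclideanCLM (𝕜:=ℂ) (Nmat a b c)‖ ≤ 1 := by
  apply ContinuousLinearMap.opNorm_le_bound _ zero_le_one
  intro x
  rw [one_mul]
  have h1 : ‖(Matrix.toEuclideanCLM (𝕜:=ℂ) (Nmat a b c)) x‖^2 ≤ ‖x‖^2 := by
    rw [Nmat_apply, norm_sq_eq]
    have hL := lagrange a b c (x 0) (x 1) (x 2)
    have h4 : (0:ℝ) ≤ ‖(starRingEnd ℂ) c * x 0 - (starRingEnd ℂ) b * x 1 + (starRingEnd ℂ) a * x 2‖^2 := sq_nonneg _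
    have hx : (0:ℝ) ≤ ‖x 0‖^2 + ‖x 1‖^2 + ‖x 2‖^2 := by positivity
    nlinarith [hL]
  nlinarith [norm_nonneg ((Matrix.toEuclideanCLM (𝕜:=ℂ) (Nmat a b c)) x), norm_nonneg x]

lemma Nmat_S_le (a b c : ℂ) (ha : a ≠ 0)
    (h : ‖Matrix.toEuclideanCLM (𝕜:=ℂ) (Nmat a b c)‖ ≤ 1) :
    ‖a‖^2+‖b‖^2+‖c‖^2 ≤ 1 := by
  set x : EuclideanSpace ℂ (Fin 3) := (WithLp.equiv 2 (Fin 3 → ℂ)).symm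
    ![(starRingEnd ℂ) a, 0, -(starRingEnd ℂ) c] with hxdef
  have hx0 : x 0 = (starRingEnd ℂ) a := rfl
  have hx1 : x 1 = 0 := rfl
  have hx2 : x 2 = -(starRingEnd ℂ) c := rfl
  have hL := lagrange a b c (x 0) (x 1) (x 2)
  have hzero : (starRingEnd ℂ) c * x 0 - (starRingEnd ℂ) b * x 1 + (starRingEnd ℂ) a * x 2 = 0 := by
    rw [hx0, hx1, hx2]; ring
  rw [hzero] at hL
  have hNx : ‖(Matrix.toEuclideanCLM (𝕜:=ℂ) (Nmat a b c)) x‖^2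
      = (‖a‖^2+‖b‖^2+‖c‖^2) * ‖x‖^2 := by
    rw [Nmat_apply, norm_sq_eq]
    simpa using hL
  have hle : ‖(Matrix.toEuclideanCLM (𝕜:=ℂ) (Nmat a b c)) x‖ ≤ ‖x‖ := by
    calc ‖(Matrix.toEuclideanCLM (𝕜:=ℂ) (Nmat a b c)) x‖
        ≤ ‖Matrix.toEuclideanCLM (𝕜:=ℂ) (Nmat a b c)‖ * ‖x‖ :=
          ContinuousLinearMap.le_opNorm _ _
      _ ≤ 1 * ‖x‖ := by gcongr
      _ = ‖x‖ := one_mul _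
  have hxnorm : ‖x‖^2 = ‖a‖^2 + ‖c‖^2 := by
    rw [norm_sq_eq, hx0, hx1, hx2]; simp
  have hxpos : 0 < ‖x‖^2 := by
    rw [hxnorm]
    have ha' : 0 < ‖a‖ := norm_pos_iff.mpr ha
    have : 0 < ‖a‖^2 := by positivity
    nlinarith [sq_nonneg ‖c‖]
  nlinarith [hle, norm_nonneg ((Matrix.toEuclideanCLM (𝕜:=ℂ) (Nmat a b c)) x), norm_nonneg x]

lemma comm_eq (D12 D13 D23 : ℝ) (z : Fin 3 → ℂ) :
    threePtDirac D12 D13 D23 * Matrix.diagonal z - Matrix.diagonal z * threePtDirac D12 D13 D23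
    = Nmat (D12*(z 1 - z 0)) (D13*(z 2 - z 0)) (D23*(z 2 - z 1)) := by
  ext i j
  rw [Matrix.sub_apply, Matrix.mul_diagonal, Matrix.diagonal_mul]
  fin_cases i <;> fin_cases j <;> simp [threePtDirac, Nmat] <;> ring

lemma opt_upper (A B C p q r : ℝ) (hp : 0 ≤ p) (hq : 0 ≤ q) (hr : 0 ≤ r) (hpqr : p ≤ q + r)
    (hS : A^2*p^2 + B^2*q^2 + C^2*r^2 ≤ 1) :
    (A^2*B^2 + A^2*C^2 + C^2*B^2) * p^2 ≤ B^2 + C^2 := by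
  have h1 : p^2 ≤ (q+r)^2 := by nlinarith
  have h2 : B^2*C^2*p^2 ≤ B^2*C^2*(q+r)^2 :=
    mul_le_mul_of_nonneg_left h1 (by positivity)
  have h3 : (B^2+C^2)*(A^2*p^2 + B^2*q^2 + C^2*r^2) ≤ (B^2+C^2)*1 :=
    mul_le_mul_of_nonneg_left hS (by positivity)
  nlinarith [sq_nonneg (B^2*q - C^2*r)]

lemma norm_real_mul_sq (r : ℝ) (w : ℂ) : ‖(r:ℂ)*w‖^2 = r^2*‖w‖^2 := by
  rw [norm_mul, mul_pow, Complex.norm_real, Real.norm_eq_abs, sq_abs]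

/-- Connes distance between the first two points of a three-point space. -/
theorem three_point_distance (D12 D13 D23 : ℝ)
    (h12 : D12 ≠ 0) (h13 : D13 ≠ 0) (h23 : D23 ≠ 0) :
    (⨆ z : {z : Fin 3 → ℂ // ‖Matrix.toEuclideanCLM (𝕜 := ℂ)
        (threePtDirac D12 D13 D23 * Matrix.diagonal z
          - Matrix.diagonal z * threePtDirac D12 D13 D23)‖ ≤ 1},
      ENNReal.ofReal ‖(z : Fin 3 → ℂ) 0 - (z : Fin 3 → ℂ) 1‖)
      = ENNReal.ofReal (Real.sqrt ((D13 ^ 2 + D23 ^ 2) /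
          (D12 ^ 2 * D13 ^ 2 + D12 ^ 2 * D23 ^ 2 + D23 ^ 2 * D13 ^ 2))) := by
  set T : ℝ := D13 ^ 2 + D23 ^ 2 with hTdef
  set K : ℝ := D12 ^ 2 * D13 ^ 2 + D12 ^ 2 * D23 ^ 2 + D23 ^ 2 * D13 ^ 2 with hKdef
  have hT : 0 < T := by positivity
  have hK : 0 < K := by positivity
  set d : ℝ := Real.sqrt (T / K) with hddef
  have hd0 : 0 ≤ d := Real.sqrt_nonneg _
  have hd2 : d ^ 2 = T / K := Real.sq_sqrt (by positivity)
  have hd2K : d ^ 2 * K = T := by rw [hd2]; field_simp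
  apply le_antisymm
  · apply iSup_le
    rintro ⟨z, hz⟩
    apply ENNReal.ofReal_le_ofReal
    by_cases h : z 0 = z 1
    · simp [h, hd0]
    · rw [comm_eq] at hz
      have ha : (D12:ℂ) * (z 1 - z 0) ≠ 0 :=
        mul_ne_zero (by exact_mod_cast h12) (sub_ne_zero.mpr (Ne.symm h))
      have hS := Nmat_S_le _ _ _ ha hz
      rw [norm_real_mul_sq, norm_real_mul_sq, norm_real_mul_sq] at hS
      rw [norm_sub_rev (z 1) (z 0)] at hS
      have hpqr : ‖z 0 - z 1‖ ≤ ‖z 2 - z 0‖ + ‖z 2 - z 1‖ := by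
        calc ‖z 0 - z 1‖ = ‖(z 2 - z 1) - (z 2 - z 0)‖ := by ring_nf
          _ ≤ ‖z 2 - z 1‖ + ‖z 2 - z 0‖ := norm_sub_le _ _
          _ = ‖z 2 - z 0‖ + ‖z 2 - z 1‖ := add_comm _ _
      have key := opt_upper D12 D13 D23 ‖z 0 - z 1‖ ‖z 2 - z 0‖ ‖z 2 - z 1‖
        (norm_nonneg _) (norm_nonneg _) (norm_nonneg _) hpqr hS
      have hsq : ‖z 0 - z 1‖ ^ 2 ≤ T / K := by
        rw [le_div_iff₀ hK]
        calc ‖z 0 - z 1‖ ^ 2 * K = K * ‖z 0 - z 1‖ ^ 2 := mul_comm _ _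
          _ ≤ T := key
      calc ‖z 0 - z 1‖ = Real.sqrt (‖z 0 - z 1‖ ^ 2) := (Real.sqrt_sq (norm_nonneg _)).symm
        _ ≤ Real.sqrt (T / K) := Real.sqrt_le_sqrt hsq
  · set zs : Fin 3 → ℂ := ![(d:ℂ), 0, ((D13^2*d/T : ℝ) : ℂ)] with hzs
    have hzs0 : zs 0 = (d:ℂ) := rfl
    have hzs1 : zs 1 = 0 := rfl
    have hzs2 : zs 2 = ((D13^2*d/T : ℝ) : ℂ) := rfl
    have hcond : ‖Matrix.toEuclideanCLM (𝕜 := ℂ)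
        (threePtDirac D12 D13 D23 * Matrix.diagonal zs
          - Matrix.diagonal zs * threePtDirac D12 D13 D23)‖ ≤ 1 := by
      rw [comm_eq]
      apply Nmat_norm_le
      rw [norm_real_mul_sq, norm_real_mul_sq, norm_real_mul_sq, hzs0, hzs1, hzs2]
      have e1 : ((0:ℂ) - (d:ℂ)) = ((-d : ℝ) : ℂ) := by push_cast; ring
      have e2 : (((D13^2*d/T : ℝ) : ℂ) - (d:ℂ)) = ((D13^2*d/T - d : ℝ) : ℂ) := by push_cast; ring
      have e3 : (((D13^2*d/T : ℝ) : ℂ) - (0:ℂ)) = ((D13^2*d/T : ℝ) : ℂ) := by push_cast; ring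
      rw [e1, e2, e3]
      simp only [Complex.norm_real, Real.norm_eq_abs, sq_abs]
      have hval : D12^2 * ((-d:ℝ))^2 + D13^2 * (D13^2*d/T - d)^2 + D23^2 * (D13^2*d/T)^2 = 1 := by
        have hT' : T ≠ 0 := ne_of_gt hT
        field_simp
        linear_combination T * hd2K
      linarith [hval]
    have key := le_iSup (fun z : {z : Fin 3 → ℂ // ‖Matrix.toEuclideanCLM (𝕜 := ℂ)
        (threePtDirac D12 D13 D23 * Matrix.diagonal z
          - Matrix.diagonal z * threePtDirac D12 D13 D23)‖ ≤ 1} =>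
      ENNReal.ofReal ‖(z : Fin 3 → ℂ) 0 - (z : Fin 3 → ℂ) 1‖) ⟨zs, hcond⟩
    have hval : ‖zs 0 - zs 1‖ = d := by
      rw [hzs0, hzs1, sub_zero, Complex.norm_real, Real.norm_eq_abs, abs_of_nonneg hd0]
    simpa [hval] using key
end

section
/- In the three-point space with real symmetric Dirac operator (zero diagonal, nonzero off-diagonal entries), the spectral distances satisfy the 'triangle inequality to the square': d(1,2)² + d(2,3)² ≥ d(1,3)², where d(i,j) are given by the formula d(1,2) = sqrt((D₁₃²+D₂₃²)/(D₁₂²D₁₃²+D₁₂²D₂₃²+D₂₃²D₁₃²)) and its cyclic permutations. -/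
/-- In the three-point space, the spectral distances satisfy the triangle inequality
"to the square": `d(1,2)² + d(2,3)² ≥ d(1,3)²`. -/
theorem three_point_triangle_sq (D12 D13 D23 : ℝ)
    (h12 : D12 ≠ 0) (h13 : D13 ≠ 0) (h23 : D23 ≠ 0) :
    let S := D12 ^ 2 * D13 ^ 2 + D12 ^ 2 * D23 ^ 2 + D23 ^ 2 * D13 ^ 2
    let d12 := Real.sqrt ((D13 ^ 2 + D23 ^ 2) / S)
    let d23 := Real.sqrt ((D12 ^ 2 + D13 ^ 2) / S)
    let d13 := Real.sqrt ((D12 ^ 2 + D23 ^ 2) / S)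
    d12 ^ 2 + d23 ^ 2 ≥ d13 ^ 2 := by
  intro S d12 d23 d13
  have hS : 0 < S := by positivity
  have h1 : d12 ^ 2 = (D13 ^ 2 + D23 ^ 2) / S := Real.sq_sqrt (by positivity)
  have h2 : d23 ^ 2 = (D12 ^ 2 + D13 ^ 2) / S := Real.sq_sqrt (by positivity)
  have h3 : d13 ^ 2 = (D12 ^ 2 + D23 ^ 2) / S := Real.sq_sqrt (by positivity)
  rw [h1, h2, h3, ge_iff_le, div_le_iff₀ hS, ← add_div, div_mul_eq_mul_div,
    le_div_iff₀ hS]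
  nlinarith [sq_nonneg D13, sq_nonneg S]
end

section
/- Given three positive real numbers a, b, c with a² + b² ≥ c², b² + c² ≥ a², and a² + c² ≥ b², and with a, b, c satisfying the strict triangle inequality so the expressions below are defined, the real numbers D₁₂ = sqrt( 2(b²+c²−a²) / ((a+b+c)(−a+b+c)(a−b+c)(a+b−c)) ) and its cyclic permutations D₁₃, D₂₃ satisfy the inversion: sqrt((D₁₃²+D₂₃²)/(D₁₂²D₁₃²+D₁₂²D₂₃²+D₂₃²D₁₃²)) = a, and cyclically for b and c. -/
/-- Inversion of the three-point distance formula: given `a b c > 0` satisfying the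
squared triangle inequalities (and the strict triangle inequality, so that the
expressions are defined), the Dirac coefficients `D₁₂, D₁₃, D₂₃` below reproduce
`a, b, c` as spectral distances. -/
theorem three_point_inversion (a b c : ℝ) (ha : 0 < a) (hb : 0 < b) (hc : 0 < c)
    (h1 : a ^ 2 + b ^ 2 ≥ c ^ 2) (h2 : b ^ 2 + c ^ 2 ≥ a ^ 2) (h3 : a ^ 2 + c ^ 2 ≥ b ^ 2)
    (t1 : a < b + c) (t2 : b < a + c) (t3 : c < a + b) :
    let P := (a + b + c) * (-a + b + c) * (a - b + c) * (a + b - c)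
    let D12 := Real.sqrt (2 * (b ^ 2 + c ^ 2 - a ^ 2) / P)
    let D13 := Real.sqrt (2 * (c ^ 2 + a ^ 2 - b ^ 2) / P)
    let D23 := Real.sqrt (2 * (a ^ 2 + b ^ 2 - c ^ 2) / P)
    let S := D12 ^ 2 * D13 ^ 2 + D12 ^ 2 * D23 ^ 2 + D23 ^ 2 * D13 ^ 2
    Real.sqrt ((D13 ^ 2 + D23 ^ 2) / S) = a ∧
      Real.sqrt ((D12 ^ 2 + D23 ^ 2) / S) = b ∧
      Real.sqrt ((D12 ^ 2 + D13 ^ 2) / S) = c := by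
  intro P D12 D13 D23 S
  have hP : (0:ℝ) < P := by
    have : 0 < (a + b + c) * (-a + b + c) * (a - b + c) * (a + b - c) := by
      apply mul_pos (mul_pos (mul_pos (by linarith) (by linarith)) (by linarith)) (by linarith)
    exact this
  have hPne : P ≠ 0 := ne_of_gt hP
  have e12 : D12 ^ 2 = 2 * (b ^ 2 + c ^ 2 - a ^ 2) / P :=
    Real.sq_sqrt (div_nonneg (by linarith) hP.le)
  have e13 : D13 ^ 2 = 2 * (c ^ 2 + a ^ 2 - b ^ 2) / P :=
    Real.sq_sqrt (div_nonneg (by linarith) hP.le)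
  have e23 : D23 ^ 2 = 2 * (a ^ 2 + b ^ 2 - c ^ 2) / P :=
    Real.sq_sqrt (div_nonneg (by linarith) hP.le)
  have hSP : S = 4 / P := by
    show D12 ^ 2 * D13 ^ 2 + D12 ^ 2 * D23 ^ 2 + D23 ^ 2 * D13 ^ 2 = 4 / P
    rw [e12, e13, e23]
    have hPdef : P = (a + b + c) * (-a + b + c) * (a - b + c) * (a + b - c) := rfl
    field_simp
    nlinarith [hPdef, sq_nonneg P]
  constructor
  · have : (D13 ^ 2 + D23 ^ 2) / S = a ^ 2 := by
      rw [hSP, e13, e23]; field_simp; ring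
    rw [this, Real.sqrt_sq ha.le]
  constructor
  · have : (D12 ^ 2 + D23 ^ 2) / S = b ^ 2 := by
      rw [hSP, e12, e23]; field_simp; ring
    rw [this, Real.sqrt_sq hb.le]
  · have : (D12 ^ 2 + D13 ^ 2) / S = c ^ 2 := by
      rw [hSP, e12, e13]; field_simp; ring
    rw [this, Real.sqrt_sq hc.le]
end

section
/- Let A = ℂ^N act diagonally on H = ℂ^N and let D be the real symmetric N×N matrix with zero diagonal and all off-diagonal entries equal to a nonzero constant k. Then the spectral distance between any two pure states δ_i, δ_j (i ≠ j) equals (1/|k|)·sqrt(2/N). -/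
open scoped ENNReal
open Finset

noncomputable def completeDirac (N : ℕ) (k : ℝ) : Matrix (Fin N) (Fin N) ℂ :=
  Matrix.of fun i j => if i = j then 0 else (k : ℂ)

lemma comm_entry (N : ℕ) (k : ℝ) (z : Fin N → ℂ) (a b : Fin N) :
    (completeDirac N k * Matrix.diagonal z - Matrix.diagonal z * completeDirac N k) a b
      = (k : ℂ) * (z b - z a) := by
  by_cases h : a = b
  · subst h
    simp [completeDirac, Matrix.sub_apply, Matrix.mul_diagonal, Matrix.diagonal_mul]
  · simp only [Matrix.sub_apply, Matrix.mul_diagonal, Matrix.diagonal_mul, completeDirac,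
      Matrix.of_apply, if_neg h]
    ring

lemma comm_mulVec (N : ℕ) (k : ℝ) (z : Fin N → ℂ) (x : Fin N → ℂ) (a : Fin N) :
    (completeDirac N k * Matrix.diagonal z - Matrix.diagonal z * completeDirac N k).mulVec x a
      = (k : ℂ) * ((∑ b, z b * x b) - z a * ∑ b, x b) := by
  simp only [Matrix.mulVec, dotProduct, comm_entry]
  rw [Finset.mul_sum, mul_sub, Finset.mul_sum, Finset.mul_sum, ← Finset.sum_sub_distrib]
  refine Finset.sum_congr rfl fun b _ => by ring

lemma sum_split {M : Type*} [AddCommMonoid M] {N : ℕ} (i j : Fin N) (hij : i ≠ j)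
    (f : Fin N → M) :
    ∑ a, f a = f i + f j + ∑ a ∈ (Finset.univ.erase i).erase j, f a := by
  have hj : j ∈ Finset.univ.erase i := Finset.mem_erase.2 ⟨hij.symm, Finset.mem_univ j⟩
  rw [← Finset.add_sum_erase _ f (Finset.mem_univ i), ← Finset.add_sum_erase _ f hj, add_assoc]

lemma euclid_norm (N : ℕ) (v : Fin N → ℂ) :
    ‖(WithLp.equiv 2 (Fin N → ℂ)).symm v‖ = Real.sqrt (∑ b, ‖v b‖ ^ 2) := by
  rw [EuclideanSpace.norm_eq]
  simp

lemma clm_apply (N : ℕ) (A : Matrix (Fin N) (Fin N) ℂ) (v : Fin N → ℂ) :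
    Matrix.toEuclideanCLM (𝕜 := ℂ) A ((WithLp.equiv 2 (Fin N → ℂ)).symm v)
      = (WithLp.equiv 2 (Fin N → ℂ)).symm (A.mulVec v) := by
  exact Matrix.toEuclideanCLM_toLp A v

lemma upper_bound (N : ℕ) (hN : 2 ≤ N) (k : ℝ) (hk : k ≠ 0) (i j : Fin N) (hij : i ≠ j)
    (z : Fin N → ℂ)
    (hz : ‖Matrix.toEuclideanCLM (𝕜 := ℂ) (completeDirac N k * Matrix.diagonal z
          - Matrix.diagonal z * completeDirac N k)‖ ≤ 1) :
    ‖z i - z j‖ ≤ Real.sqrt 2 / (|k| * Real.sqrt N) := by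
  set C := completeDirac N k * Matrix.diagonal z - Matrix.diagonal z * completeDirac N k with hC
  set x : Fin N → ℂ := fun a => if a = i then 1 else if a = j then -1 else 0 with hx
  have hxi : x i = 1 := by simp [hx]
  have hxj : x j = -1 := by simp [hx, hij.symm]
  have hxo : ∀ a ∈ (Finset.univ.erase i).erase j, x a = 0 := by
    intro a ha
    rcases Finset.mem_erase.1 ha with ⟨haj, hai⟩
    rcases Finset.mem_erase.1 hai with ⟨hai, _⟩
    simp [hx, hai, haj]
  have hsum : ∑ b, x b = 0 := by
    rw [sum_split i j hij, hxi, hxj, Finset.sum_eq_zero hxo]; ring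
  have hzx : ∑ b, z b * x b = z i - z j := by
    rw [sum_split i j hij, hxi, hxj,
      Finset.sum_eq_zero (fun a ha => by rw [hxo a ha, mul_zero])]
    ring
  have hmv : ∀ a, C.mulVec x a = (k : ℂ) * (z i - z j) := fun a => by
    rw [hC, comm_mulVec, hzx, hsum]; ring
  have hnx : ‖(WithLp.equiv 2 (Fin N → ℂ)).symm x‖ = Real.sqrt 2 := by
    rw [euclid_norm, sum_split i j hij, hxi, hxj,
      Finset.sum_eq_zero (fun a ha => by rw [hxo a ha]; simp)]
    norm_num
  have key := (Matrix.toEuclideanCLM (𝕜 := ℂ) C).le_opNorm ((WithLp.equiv 2 (Fin N → ℂ)).symm x)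
  rw [clm_apply, euclid_norm, hnx] at key
  have h1 : ∑ b, ‖(C.mulVec x) b‖ ^ 2 = (N : ℝ) * (|k| * ‖z i - z j‖) ^ 2 := by
    rw [Finset.sum_congr rfl fun b _ => by
      rw [hmv b, norm_mul, Complex.norm_real, Real.norm_eq_abs]]
    rw [Finset.sum_const, Finset.card_univ, Fintype.card_fin, nsmul_eq_mul]
  have h2 : Real.sqrt ((N : ℝ) * (|k| * ‖z i - z j‖) ^ 2)
      = Real.sqrt N * (|k| * ‖z i - z j‖) := by
    rw [Real.sqrt_mul (Nat.cast_nonneg N), Real.sqrt_sq (by positivity)]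
  rw [h1, h2] at key
  have hkpos : 0 < |k| := abs_pos.2 hk
  have hNpos : 0 < Real.sqrt N := Real.sqrt_pos.2 (by positivity)
  rw [le_div_iff₀ (by positivity)]
  nlinarith [Real.sqrt_nonneg 2, hz, mul_le_mul_of_nonneg_right hz (Real.sqrt_nonneg 2)]

lemma bessel_ineq (N : ℕ) (i j : Fin N) (hij : i ≠ j) (x : Fin N → ℂ) :
    (N : ℝ) * ‖x i - x j‖ ^ 2 + 2 * ‖∑ b, x b‖ ^ 2 ≤ 2 * N * ∑ b, ‖x b‖ ^ 2 := by
  set s := (Finset.univ.erase i).erase j with hs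
  set u : Fin N → ℝ := fun a => if a = i ∨ a = j then ‖x i + x j‖ / 2 else ‖x a‖ with hu
  have hui : u i = ‖x i + x j‖ / 2 := by simp [hu]
  have huj : u j = ‖x i + x j‖ / 2 := by simp [hu]
  have hus : ∀ a ∈ s, u a = ‖x a‖ := by
    intro a ha
    rcases Finset.mem_erase.1 ha with ⟨haj, hai⟩
    rcases Finset.mem_erase.1 hai with ⟨hai, _⟩
    simp [hu, hai, haj]
  have hT : ‖∑ b, x b‖ ≤ ∑ a, u a := by
    rw [sum_split i j hij x, sum_split i j hij u, hui, huj, Finset.sum_congr rfl hus]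
    calc ‖x i + x j + ∑ a ∈ s, x a‖ ≤ ‖x i + x j‖ + ‖∑ a ∈ s, x a‖ := norm_add_le _ _
      _ ≤ ‖x i + x j‖ + ∑ a ∈ s, ‖x a‖ := by
            exact add_le_add le_rfl (norm_sum_le _ _)
      _ = ‖x i + x j‖ / 2 + ‖x i + x j‖ / 2 + ∑ a ∈ s, ‖x a‖ := by ring
  have hu0 : 0 ≤ ∑ a, u a := Finset.sum_nonneg fun a _ => by
    simp only [hu]; split <;> positivity
  have hcs : (∑ a, u a) ^ 2 ≤ (N : ℝ) * ∑ a, u a ^ 2 := by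
    have h := sq_sum_le_card_mul_sum_sq (s := (Finset.univ : Finset (Fin N))) (f := u)
    simpa [Finset.card_univ, Fintype.card_fin] using h
  have hsum_u2 : ∑ a, u a ^ 2 = ‖x i + x j‖ ^ 2 / 2 + ∑ a ∈ s, ‖x a‖ ^ 2 := by
    rw [sum_split i j hij, hui, huj,
      Finset.sum_congr rfl (fun a ha => by rw [hus a ha])]
    ring
  have hT2 : ‖∑ b, x b‖ ^ 2 ≤ (N : ℝ) * (‖x i + x j‖ ^ 2 / 2 + ∑ a ∈ s, ‖x a‖ ^ 2) := by
    calc ‖∑ b, x b‖ ^ 2 ≤ (∑ a, u a) ^ 2 := by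
            exact pow_le_pow_left₀ (norm_nonneg _) hT 2
      _ ≤ (N : ℝ) * ∑ a, u a ^ 2 := hcs
      _ = _ := by rw [hsum_u2]
  have hpar : ‖x i + x j‖ ^ 2 + ‖x i - x j‖ ^ 2 = 2 * (‖x i‖ ^ 2 + ‖x j‖ ^ 2) := by
    have h := parallelogram_law_with_norm ℂ (x i) (x j)
    nlinarith [h]
  have hparN := congrArg (fun r => (N : ℝ) * r) hpar
  have hsx : ∑ b, ‖x b‖ ^ 2 = ‖x i‖ ^ 2 + ‖x j‖ ^ 2 + ∑ a ∈ s, ‖x a‖ ^ 2 :=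
    sum_split i j hij _
  have hS : (0 : ℝ) ≤ ∑ a ∈ s, ‖x a‖ ^ 2 := Finset.sum_nonneg fun a _ => by positivity
  rw [hsx]
  nlinarith [hT2, hparN, hS]

set_option maxHeartbeats 1000000 in
lemma witness_norm_le (N : ℕ) (hN : 2 ≤ N) (k : ℝ) (hk : k ≠ 0) (i j : Fin N) (hij : i ≠ j) :
    ‖Matrix.toEuclideanCLM (𝕜 := ℂ)
      (completeDirac N k * Matrix.diagonal
          (fun a => if a = i then ((1 / (|k| * Real.sqrt (2 * N)) : ℝ) : ℂ)
            else if a = j then -((1 / (|k| * Real.sqrt (2 * N)) : ℝ) : ℂ) else 0)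
        - Matrix.diagonal
          (fun a => if a = i then ((1 / (|k| * Real.sqrt (2 * N)) : ℝ) : ℂ)
            else if a = j then -((1 / (|k| * Real.sqrt (2 * N)) : ℝ) : ℂ) else 0)
          * completeDirac N k)‖ ≤ 1 := by
  set t : ℝ := 1 / (|k| * Real.sqrt (2 * N)) with ht
  set z : Fin N → ℂ := fun a => if a = i then (t : ℂ) else if a = j then -(t : ℂ) else 0 with hz
  have hNpos : (0 : ℝ) < N := by positivity
  have hkpos : 0 < |k| := abs_pos.2 hk
  have hsq : (0 : ℝ) < Real.sqrt (2 * N) := Real.sqrt_pos.2 (by positivity)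
  have htpos : 0 < t := by rw [ht]; positivity
  have hzi : z i = (t : ℂ) := by simp [hz]
  have hzj : z j = -(t : ℂ) := by simp [hz, hij.symm]
  have hzo : ∀ a ∈ (Finset.univ.erase i).erase j, z a = 0 := by
    intro a ha
    rcases Finset.mem_erase.1 ha with ⟨haj, hai⟩
    rcases Finset.mem_erase.1 hai with ⟨hai, _⟩
    simp [hz, hai, haj]
  apply ContinuousLinearMap.opNorm_le_bound _ zero_le_one
  intro y
  have hy : y = (WithLp.equiv 2 (Fin N → ℂ)).symm (WithLp.equiv 2 (Fin N → ℂ) y) :=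
    (Equiv.symm_apply_apply _ _).symm
  set x : Fin N → ℂ := WithLp.equiv 2 (Fin N → ℂ) y with hxdef
  rw [hy, clm_apply, euclid_norm, euclid_norm, one_mul]
  apply Real.sqrt_le_sqrt
  set σ : ℂ := x i - x j with hσ
  set T : ℂ := ∑ b, x b with hT
  set C := completeDirac N k * Matrix.diagonal z - Matrix.diagonal z * completeDirac N k with hC
  have hzx : ∑ b, z b * x b = (t : ℂ) * σ := by
    rw [sum_split i j hij, hzi, hzj,
      Finset.sum_eq_zero (fun a ha => by rw [hzo a ha, zero_mul])]
    rw [hσ]; ring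
  have hmv : ∀ a, C.mulVec x a = (k : ℂ) * ((t : ℂ) * σ - z a * T) := fun a => by
    rw [hC, comm_mulVec, hzx, hT]
  set c : ℝ := |k| * t with hc
  have hni : ‖C.mulVec x i‖ = c * ‖σ - T‖ := by
    rw [hmv i, hzi]
    rw [show (k : ℂ) * ((t : ℂ) * σ - (t : ℂ) * T) = ((k : ℂ) * (t : ℂ)) * (σ - T) by ring]
    rw [norm_mul, norm_mul, Complex.norm_real, Complex.norm_real, Real.norm_eq_abs,
      Real.norm_eq_abs, abs_of_pos htpos, hc]
  have hnj : ‖C.mulVec x j‖ = c * ‖σ + T‖ := by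
    rw [hmv j, hzj]
    rw [show (k : ℂ) * ((t : ℂ) * σ - (-(t : ℂ)) * T) = ((k : ℂ) * (t : ℂ)) * (σ + T) by ring]
    rw [norm_mul, norm_mul, Complex.norm_real, Complex.norm_real, Real.norm_eq_abs,
      Real.norm_eq_abs, abs_of_pos htpos, hc]
  have hno : ∀ a ∈ (Finset.univ.erase i).erase j, ‖C.mulVec x a‖ ^ 2 = (c * ‖σ‖) ^ 2 := by
    intro a ha
    rw [hmv a, hzo a ha]
    rw [show (k : ℂ) * ((t : ℂ) * σ - 0 * T) = ((k : ℂ) * (t : ℂ)) * σ by ring]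
    rw [norm_mul, norm_mul, Complex.norm_real, Complex.norm_real, Real.norm_eq_abs,
      Real.norm_eq_abs, abs_of_pos htpos, hc]
  have hcard : (((Finset.univ.erase i).erase j).card : ℝ) = (N : ℝ) - 2 := by
    have h1 : ((Finset.univ.erase i).erase j).card = N - 2 := by
      rw [Finset.card_erase_of_mem (Finset.mem_erase.2 ⟨hij.symm, Finset.mem_univ j⟩),
        Finset.card_erase_of_mem (Finset.mem_univ i), Finset.card_univ, Fintype.card_fin]
      omega
    rw [h1, Nat.cast_sub hN]
    norm_num
  have hsum : ∑ b, ‖C.mulVec x b‖ ^ 2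
      = (c * ‖σ - T‖) ^ 2 + (c * ‖σ + T‖) ^ 2 + ((N : ℝ) - 2) * (c * ‖σ‖) ^ 2 := by
    rw [sum_split i j hij, hni, hnj, Finset.sum_congr rfl hno, Finset.sum_const,
      nsmul_eq_mul, hcard]
  have hpar : ‖σ + T‖ ^ 2 + ‖σ - T‖ ^ 2 = 2 * (‖σ‖ ^ 2 + ‖T‖ ^ 2) := by
    have h := parallelogram_law_with_norm ℂ σ T
    nlinarith [h]
  have hbessel := bessel_ineq N i j hij x
  have hc2 : c ^ 2 * (2 * N) = 1 := by
    rw [hc, ht]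
    rw [mul_pow, div_pow, one_pow, mul_pow, Real.sq_sqrt (by positivity : (0:ℝ) ≤ 2 * N)]
    field_simp
  have hN2 : (2 : ℝ) ≤ (N : ℝ) := by exact_mod_cast hN
  rw [hsum]
  have hfinal : (c * ‖σ - T‖) ^ 2 + (c * ‖σ + T‖) ^ 2 + ((N : ℝ) - 2) * (c * ‖σ‖) ^ 2
      = c ^ 2 * ((N : ℝ) * ‖σ‖ ^ 2 + 2 * ‖T‖ ^ 2) := by
    nlinarith [hpar]
  rw [hfinal]
  calc c ^ 2 * ((N : ℝ) * ‖σ‖ ^ 2 + 2 * ‖T‖ ^ 2)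
      ≤ c ^ 2 * (2 * N * ∑ b, ‖x b‖ ^ 2) := by
        apply mul_le_mul_of_nonneg_left _ (by positivity)
        simpa [hσ, hT] using hbessel
    _ = ∑ b, ‖x b‖ ^ 2 := by
        rw [show c ^ 2 * (2 * (N:ℝ) * ∑ b, ‖x b‖ ^ 2) = (c ^ 2 * (2 * N)) * ∑ b, ‖x b‖ ^ 2 by ring,
          hc2, one_mul]

lemma const_eq (N : ℕ) (hN : 2 ≤ N) (k : ℝ) (hk : k ≠ 0) :
    (1 / |k|) * Real.sqrt (2 / N) = Real.sqrt 2 / (|k| * Real.sqrt N) := by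
  rw [Real.sqrt_div (by norm_num : (0:ℝ) ≤ 2) (N : ℝ)]
  field_simp

lemma witness_val (N : ℕ) (hN : 2 ≤ N) (k : ℝ) (hk : k ≠ 0) :
    2 * (1 / (|k| * Real.sqrt (2 * N))) = Real.sqrt 2 / (|k| * Real.sqrt N) := by
  have hkpos : 0 < |k| := abs_pos.2 hk
  have hNpos : (0 : ℝ) < N := by positivity
  have hsN : 0 < Real.sqrt N := Real.sqrt_pos.2 hNpos
  have hs2 : 0 < Real.sqrt 2 := by positivity
  rw [Real.sqrt_mul (by norm_num : (0:ℝ) ≤ 2), mul_one_div]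
  rw [div_eq_div_iff (by positivity) (by positivity)]
  have h22 : Real.sqrt 2 * Real.sqrt 2 = 2 := Real.mul_self_sqrt (by norm_num)
  linear_combination (-1 : ℝ) * (|k| * Real.sqrt N) * h22

/-- On the maximally connected graph the spectral distance between any two points is
`(1/|k|)·√(2/N)`. -/
theorem complete_graph_distance (N : ℕ) (hN : 2 ≤ N) (k : ℝ) (hk : k ≠ 0)
    (i j : Fin N) (hij : i ≠ j) :
    (⨆ z : {z : Fin N → ℂ // ‖Matrix.toEuclideanCLM (𝕜 := ℂ)
        (completeDirac N k * Matrix.diagonal z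
          - Matrix.diagonal z * completeDirac N k)‖ ≤ 1},
      ENNReal.ofReal ‖(z : Fin N → ℂ) i - (z : Fin N → ℂ) j‖)
      = ENNReal.ofReal ((1 / |k|) * Real.sqrt (2 / N)) := by
  have hkpos : 0 < |k| := abs_pos.2 hk
  have hNpos : (0 : ℝ) < N := by positivity
  have htpos : 0 < 1 / (|k| * Real.sqrt (2 * N)) := by positivity
  apply le_antisymm
  · apply iSup_le
    rintro ⟨z, hz⟩
    exact ENNReal.ofReal_le_ofReal
      ((upper_bound N hN k hk i j hij z hz).trans_eq (const_eq N hN k hk).symm)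
  · refine le_iSup_of_le
      (⟨fun a => if a = i then ((1 / (|k| * Real.sqrt (2 * N)) : ℝ) : ℂ)
        else if a = j then -((1 / (|k| * Real.sqrt (2 * N)) : ℝ) : ℂ) else 0,
        witness_norm_le N hN k hk i j hij⟩) ?_
    apply le_of_eq
    congr 1
    show (1 / |k|) * Real.sqrt (2 / N)
      = ‖(if i = i then ((1 / (|k| * Real.sqrt (2 * N)) : ℝ) : ℂ)
            else if i = j then -((1 / (|k| * Real.sqrt (2 * N)) : ℝ) : ℂ) else 0)
          - (if j = i then ((1 / (|k| * Real.sqrt (2 * N)) : ℝ) : ℂ)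
            else if j = j then -((1 / (|k| * Real.sqrt (2 * N)) : ℝ) : ℂ) else 0)‖
    rw [if_pos rfl, if_neg (fun h : j = i => hij h.symm), if_pos rfl,
      const_eq N hN k hk, ← witness_val N hN k hk]
    rw [show ((1 / (|k| * Real.sqrt (2 * N)) : ℝ) : ℂ)
          - -((1 / (|k| * Real.sqrt (2 * N)) : ℝ) : ℂ)
        = ((2 * (1 / (|k| * Real.sqrt (2 * N))) : ℝ) : ℂ) by push_cast; ring]
    rw [Complex.norm_real, Real.norm_eq_abs,
      abs_of_pos (by linarith [htpos] :
        (0:ℝ) < 2 * (1 / (|k| * Real.sqrt (2 * N))))]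
end

section
/- For the distance on a graph defined via a symmetric real incidence matrix D (as Dirac operator on ℂ^N with ℂ^N acting diagonally), the spectral distance between two points i, j is bounded above by the geodesic graph distance: d(i,j) ≤ L_{ij}, where L_{ij} is the infimum over paths γ = (i, i₂, …, i_{p−1}, j) with all D_{i_k i_{k+1}} ≠ 0 of Σ_k 1/|D_{i_k i_{k+1}}|. -/
open scoped ENNReal

/-- A path in the graph with incidence matrix `Dm`, from `i` to `j`: a finite sequence
of distinct vertices with consecutive vertices linked by nonzero entries of `Dm`. -/
structure GraphPath (N : ℕ) (Dm : Matrix (Fin N) (Fin N) ℝ) (i j : Fin N) where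
  len : ℕ
  vert : Fin (len + 1) → Fin N
  inj : Function.Injective vert
  first : vert 0 = i
  last : vert (Fin.last len) = j
  link : ∀ k : Fin len, Dm (vert k.castSucc) (vert k.succ) ≠ 0

/-- The length of a path: the sum of the reciprocals `1/|D_{i_k i_{k+1}}|`. -/
noncomputable def GraphPath.length {N : ℕ} {Dm : Matrix (Fin N) (Fin N) ℝ} {i j : Fin N}
    (p : GraphPath N Dm i j) : ℝ :=
  ∑ k : Fin p.len, 1 / |Dm (p.vert k.castSucc) (p.vert k.succ)|

lemma entry_norm_le_clm {N : ℕ} (M : Matrix (Fin N) (Fin N) ℂ) (a b : Fin N) :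
    ‖M a b‖ ≤ ‖Matrix.toEuclideanCLM (𝕜 := ℂ) M‖ := by
  set T := Matrix.toEuclideanCLM (𝕜 := ℂ) M
  have hy : T (EuclideanSpace.single b 1) = (WithLp.equiv 2 _).symm (M.mulVec (Pi.single b 1)) := by
    have : (EuclideanSpace.single b (1:ℂ) : EuclideanSpace ℂ (Fin N))
        = (WithLp.equiv 2 _).symm (Pi.single b 1) := rfl
    rw [this]
    exact Matrix.toEuclideanCLM_toLp M _
  have h1 : (M a b) = inner (𝕜 := ℂ) (EuclideanSpace.single a (1:ℂ)) (T (EuclideanSpace.single b 1)) := by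
    rw [EuclideanSpace.inner_single_left, hy]
    simp [Matrix.mulVec_single]
  calc ‖M a b‖ ≤ ‖(EuclideanSpace.single a (1:ℂ) : EuclideanSpace ℂ (Fin N))‖ * ‖T (EuclideanSpace.single b 1)‖ := by
        rw [h1]; exact norm_inner_le_norm _ _
    _ = ‖T (EuclideanSpace.single b 1)‖ := by simp [EuclideanSpace.norm_single]
    _ ≤ ‖T‖ := by
        have h := T.le_opNorm (EuclideanSpace.single b 1)
        rwa [EuclideanSpace.norm_single, norm_one, mul_one] at h

lemma fin_telescope {n : ℕ} (f : Fin (n + 1) → ℂ) :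
    ∑ k : Fin n, (f k.castSucc - f k.succ) = f 0 - f (Fin.last n) := by
  induction n with
  | zero => simp
  | succ n ih =>
    rw [Fin.sum_univ_castSucc]
    have h := ih (fun k => f k.castSucc)
    have hrw : ∀ k : Fin n, f k.castSucc.castSucc - f k.castSucc.succ
        = f k.castSucc.castSucc - f k.succ.castSucc := by
      intro k; rw [Fin.succ_castSucc]
    rw [Finset.sum_congr rfl (fun k _ => hrw k), h, Fin.succ_last]
    simp [Fin.castSucc_zero]

set_option maxHeartbeats 1000000 in
/-- The spectral distance on a graph is bounded above by the geodesic graph distance. -/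
theorem graph_distance_le_geodesic (N : ℕ) (Dm : Matrix (Fin N) (Fin N) ℝ)
    (hsym : Dm.IsSymm) (hdiag : ∀ i, Dm i i = 0) (i j : Fin N) :
    (⨆ z : {z : Fin N → ℂ // ‖Matrix.toEuclideanCLM (𝕜 := ℂ)
        ((Dm.map (fun x => (x : ℂ))) * Matrix.diagonal z
          - Matrix.diagonal z * (Dm.map (fun x => (x : ℂ))))‖ ≤ 1},
      ENNReal.ofReal ‖(z : Fin N → ℂ) i - (z : Fin N → ℂ) j‖)
      ≤ ⨅ p : GraphPath N Dm i j, ENNReal.ofReal p.length := by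
  apply iSup_le
  rintro ⟨z, hz⟩
  apply le_iInf
  intro p
  apply ENNReal.ofReal_le_ofReal
  set D : Matrix (Fin N) (Fin N) ℂ := Dm.map (fun x => (x : ℂ)) with hD
  set C : Matrix (Fin N) (Fin N) ℂ := D * Matrix.diagonal z - Matrix.diagonal z * D with hC
  -- edge bound
  have edge : ∀ a b : Fin N, Dm a b ≠ 0 → ‖z a - z b‖ ≤ 1 / |Dm a b| := by
    intro a b hab
    have hCab : C a b = D a b * (z b - z a) := by
      simp [hC, Matrix.sub_apply, Matrix.mul_diagonal, Matrix.diagonal_mul, mul_comm]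
      ring
    have h1 : ‖C a b‖ ≤ 1 := le_trans (entry_norm_le_clm C a b) hz
    have h2 : ‖D a b‖ = |Dm a b| := by
      simp [hD, Matrix.map_apply, Complex.norm_real, Real.norm_eq_abs]
    have h3 : |Dm a b| * ‖z b - z a‖ ≤ 1 := by
      rw [← h2, ← norm_mul, ← hCab]; exact h1
    have hpos : 0 < |Dm a b| := abs_pos.mpr hab
    rw [← norm_neg, neg_sub]
    rw [le_div_iff₀ hpos]
    linarith [h3]
  -- telescoping
  have htel : z i - z j = ∑ k : Fin p.len, (z (p.vert k.castSucc) - z (p.vert k.succ)) := by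
    rw [fin_telescope (fun k => z (p.vert k)), p.first, p.last]
  calc ‖z i - z j‖ = ‖∑ k : Fin p.len, (z (p.vert k.castSucc) - z (p.vert k.succ))‖ := by
        rw [htel]
    _ ≤ ∑ k : Fin p.len, ‖z (p.vert k.castSucc) - z (p.vert k.succ)‖ := norm_sum_le _ _
    _ ≤ ∑ k : Fin p.len, 1 / |Dm (p.vert k.castSucc) (p.vert k.succ)| :=
        Finset.sum_le_sum fun k _ => edge _ _ (p.link k)
    _ = p.length := rfl
end

section
/- Let A = M₂(ℂ) act on H = ℂ² with D = diag(d₁, d₂), d₁ ≠ d₂. For two states φ, φ' of M₂(ℂ) identified with points (x̃, ỹ, z̃) and (x̃', ỹ', z̃') of the closed 3-ball via φ(a) = (1+z̃)/2·a₁₁ + (1−z̃)/2·a₂₂ + Re((x̃+iỹ)·a₁₂) (assuming a self-adjoint), if z̃ = z̃' then the spectral distance is d(φ, φ') = (1/|d₁−d₂|)·sqrt((x̃−x̃')² + (ỹ−ỹ')²). -/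
open scoped ENNReal

open Matrix Complex

lemma entry_le_clm_norm (M : Matrix (Fin 2) (Fin 2) ℂ) (i j : Fin 2) :
    ‖M i j‖ ≤ ‖Matrix.toEuclideanCLM (𝕜 := ℂ) M‖ := by
  have h2 : Matrix.toEuclideanCLM (𝕜 := ℂ) M
        ((WithLp.equiv 2 (Fin 2 → ℂ)).symm (Pi.single j 1)) =
      (WithLp.equiv 2 (Fin 2 → ℂ)).symm (M *ᵥ Pi.single j 1) :=
    Matrix.toEuclideanCLM_toLp M _
  set v : EuclideanSpace ℂ (Fin 2) := (WithLp.equiv 2 (Fin 2 → ℂ)).symm (M *ᵥ Pi.single j 1)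
  have hvi : ‖v i‖ ≤ ‖v‖ := by
    have := norm_inner_le_norm (𝕜 := ℂ) (EuclideanSpace.single i (1:ℂ)) v
    simpa [EuclideanSpace.inner_single_left, EuclideanSpace.norm_single] using this
  have hvi2 : v i = M i j := by
    simp [v, Matrix.mulVec_single]
  have h3 : ‖v‖ ≤ ‖Matrix.toEuclideanCLM (𝕜 := ℂ) M‖ := by
    have hone : ‖((WithLp.equiv 2 (Fin 2 → ℂ)).symm (Pi.single j 1) : EuclideanSpace ℂ (Fin 2))‖ = 1 := by
      simpa using EuclideanSpace.norm_single (𝕜 := ℂ) j 1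
    calc ‖v‖ = ‖Matrix.toEuclideanCLM (𝕜 := ℂ) M ((WithLp.equiv 2 (Fin 2 → ℂ)).symm (Pi.single j 1))‖ := by rw [h2]
    _ ≤ ‖Matrix.toEuclideanCLM (𝕜 := ℂ) M‖ * 1 := by
        rw [← hone]; exact (Matrix.toEuclideanCLM (𝕜 := ℂ) M).le_opNorm _
    _ = _ := mul_one _
  rw [← hvi2]; exact hvi.trans h3

lemma clm_norm_offdiag_le (α β : ℂ) (hα : ‖α‖ ≤ 1) (hβ : ‖β‖ ≤ 1) :
    ‖Matrix.toEuclideanCLM (𝕜 := ℂ) !![0, α; β, 0]‖ ≤ 1 := by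
  refine ContinuousLinearMap.opNorm_le_bound _ zero_le_one fun x => ?_
  rw [one_mul]
  have hx : x = (WithLp.equiv 2 (Fin 2 → ℂ)).symm (WithLp.equiv 2 (Fin 2 → ℂ) x) := rfl
  rw [hx, show ∀ y, Matrix.toEuclideanCLM (𝕜 := ℂ) !![0, α; β, 0] ((WithLp.equiv 2 (Fin 2 → ℂ)).symm y) = (WithLp.equiv 2 (Fin 2 → ℂ)).symm (!![0, α; β, 0] *ᵥ y) from fun y => rfl]
  set y := WithLp.equiv 2 (Fin 2 → ℂ) x
  rw [EuclideanSpace.norm_eq, EuclideanSpace.norm_eq]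
  apply Real.sqrt_le_sqrt
  rw [Fin.sum_univ_two, Fin.sum_univ_two]
  have h0 : (!![0, α; β, 0] *ᵥ y) 0 = α * y 1 := by
    simp [Matrix.mulVec, dotProduct, Fin.sum_univ_two, Matrix.vecHead, Matrix.vecTail]
  have h1 : (!![0, α; β, 0] *ᵥ y) 1 = β * y 0 := by
    simp [Matrix.mulVec, dotProduct, Fin.sum_univ_two, Matrix.vecHead, Matrix.vecTail]
  have e0 : ‖((WithLp.equiv 2 (Fin 2 → ℂ)).symm (!![0, α; β, 0] *ᵥ y) : EuclideanSpace ℂ (Fin 2)) 0‖ = ‖α * y 1‖ := by rw [show ((WithLp.equiv 2 (Fin 2 → ℂ)).symm (!![0, α; β, 0] *ᵥ y) : EuclideanSpace ℂ (Fin 2)) 0 = (!![0, α; β, 0] *ᵥ y) 0 from rfl, h0]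
  have e1 : ‖((WithLp.equiv 2 (Fin 2 → ℂ)).symm (!![0, α; β, 0] *ᵥ y) : EuclideanSpace ℂ (Fin 2)) 1‖ = ‖β * y 0‖ := by rw [show ((WithLp.equiv 2 (Fin 2 → ℂ)).symm (!![0, α; β, 0] *ᵥ y) : EuclideanSpace ℂ (Fin 2)) 1 = (!![0, α; β, 0] *ᵥ y) 1 from rfl, h1]
  simp only [Matrix.toLin'_apply]
  rw [e0, e1]
  have hy0 : ((WithLp.equiv 2 (Fin 2 → ℂ)).symm y : EuclideanSpace ℂ (Fin 2)) 0 = y 0 := rfl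
  have hy1 : ((WithLp.equiv 2 (Fin 2 → ℂ)).symm y : EuclideanSpace ℂ (Fin 2)) 1 = y 1 := rfl
  rw [hy0, hy1]
  have b0 : ‖α * y 1‖ ^ 2 ≤ ‖y 1‖ ^ 2 := by
    rw [norm_mul, mul_pow]
    have h : ‖α‖ ^ 2 ≤ 1 := by nlinarith [norm_nonneg α]
    nlinarith [sq_nonneg (‖y 1‖)]
  have b1 : ‖β * y 0‖ ^ 2 ≤ ‖y 0‖ ^ 2 := by
    rw [norm_mul, mul_pow]
    have h : ‖β‖ ^ 2 ≤ 1 := by nlinarith [norm_nonneg β]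
    nlinarith [sq_nonneg (‖y 0‖)]
  linarith

/-- The density matrix of the state of `M₂(ℂ)` associated to the point
`p = (x̃, ỹ, z̃)` of the closed 3-ball; the state is `a ↦ Tr(ρ_p a)`. -/
noncomputable def densityMat (p : ℝ × ℝ × ℝ) : Matrix (Fin 2) (Fin 2) ℂ :=
  !![((1 + p.2.2 : ℝ) : ℂ) / 2, ((p.1 : ℂ) - Complex.I * (p.2.1 : ℂ)) / 2;
     ((p.1 : ℂ) + Complex.I * (p.2.1 : ℂ)) / 2, ((1 - p.2.2 : ℝ) : ℂ) / 2]


lemma comm_eq_s14 (d₁ d₂ : ℝ) (a : Matrix (Fin 2) (Fin 2) ℂ) :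
    Matrix.diagonal ![(d₁:ℂ), (d₂:ℂ)] * a - a * Matrix.diagonal ![(d₁:ℂ), (d₂:ℂ)] =
      !![0, ((d₁:ℂ)-(d₂:ℂ)) * a 0 1; ((d₂:ℂ)-(d₁:ℂ)) * a 1 0, 0] := by
  ext i j
  fin_cases i <;> fin_cases j <;>
    simp [Matrix.mul_apply, Fin.sum_univ_two, Matrix.diagonal] <;> ring

lemma trace_eq (p p' : ℝ × ℝ × ℝ) (hz : p.2.2 = p'.2.2) (a : Matrix (Fin 2) (Fin 2) ℂ) :
    (densityMat p * a).trace - (densityMat p' * a).trace =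
      ((((p.1 - p'.1 : ℝ)) - Complex.I * ((p.2.1 - p'.2.1 : ℝ)))/2) * a 1 0 +
      ((((p.1 - p'.1 : ℝ)) + Complex.I * ((p.2.1 - p'.2.1 : ℝ)))/2) * a 0 1 := by
  simp [densityMat, Matrix.trace, Matrix.diag, Matrix.mul_apply, Fin.sum_univ_two, hz]
  push_cast
  ring

/-- For `D = diag(d₁,d₂)` with `d₁ ≠ d₂`, two states of `M₂(ℂ)` with the same
`z`-coordinate in the 3-ball are at spectral distance
`(1/|d₁-d₂|)·√((x̃-x̃')² + (ỹ-ỹ')²)`. -/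
theorem m2_same_z_distance (d₁ d₂ : ℝ) (hd : d₁ ≠ d₂) (p p' : ℝ × ℝ × ℝ)
    (hp : p.1 ^ 2 + p.2.1 ^ 2 + p.2.2 ^ 2 ≤ 1) (hp' : p'.1 ^ 2 + p'.2.1 ^ 2 + p'.2.2 ^ 2 ≤ 1)
    (hz : p.2.2 = p'.2.2) :
    (⨆ a : {a : Matrix (Fin 2) (Fin 2) ℂ // ‖Matrix.toEuclideanCLM (𝕜 := ℂ)
        (Matrix.diagonal ![(d₁ : ℂ), (d₂ : ℂ)] * a
          - a * Matrix.diagonal ![(d₁ : ℂ), (d₂ : ℂ)])‖ ≤ 1},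
      ENNReal.ofReal ‖(densityMat p * (a : Matrix (Fin 2) (Fin 2) ℂ)).trace
        - (densityMat p' * (a : Matrix (Fin 2) (Fin 2) ℂ)).trace‖)
      = ENNReal.ofReal ((1 / |d₁ - d₂|) *
          Real.sqrt ((p.1 - p'.1) ^ 2 + (p.2.1 - p'.2.1) ^ 2)) := by
  have hk : (0:ℝ) < |d₁ - d₂| := abs_pos.mpr (sub_ne_zero.mpr hd)
  set Δx : ℝ := p.1 - p'.1 with hΔx
  set Δy : ℝ := p.2.1 - p'.2.1 with hΔy
  set s : ℝ := Real.sqrt (Δx ^ 2 + Δy ^ 2) with hs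
  have hs0 : 0 ≤ s := Real.sqrt_nonneg _
  set cp : ℂ := ((Δx : ℂ) + Complex.I * (Δy : ℂ)) / 2 with hcp
  set cm : ℂ := ((Δx : ℂ) - Complex.I * (Δy : ℂ)) / 2 with hcm
  have hre : ((Δx : ℂ) + Complex.I * (Δy : ℂ)).re = Δx := by simp
  have him : ((Δx : ℂ) + Complex.I * (Δy : ℂ)).im = Δy := by simp
  have hnp : ‖cp‖ = s / 2 := by
    rw [hcp, norm_div, Complex.norm_def, Complex.normSq_apply, hre, him]
    norm_num
    rw [hs]
    ring_nf
  have hcm_conj : cm = (starRingEnd ℂ) cp := by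
    rw [hcp, hcm, map_div₀, map_add, _root_.map_mul, Complex.conj_I, Complex.conj_ofReal,
      Complex.conj_ofReal, map_ofNat]
    ring
  have hnm : ‖cm‖ = s / 2 := by rw [hcm_conj, RCLike.norm_conj, hnp]
  refine le_antisymm (iSup_le ?_) ?_
  · rintro ⟨a, ha⟩
    apply ENNReal.ofReal_le_ofReal
    rw [comm_eq_s14 d₁ d₂ a] at ha
    have hdk : ‖((d₁:ℂ) - (d₂:ℂ))‖ = |d₁ - d₂| := by
      rw [show ((d₁:ℂ) - (d₂:ℂ)) = ((d₁ - d₂ : ℝ) : ℂ) by push_cast; ring,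
        Complex.norm_real, Real.norm_eq_abs]
    have h01 : ‖a 0 1‖ ≤ 1 / |d₁ - d₂| := by
      have := (entry_le_clm_norm _ 0 1).trans ha
      simp only [Matrix.cons_val_one, Matrix.head_cons, Matrix.cons_val_zero,
        Matrix.cons_val', Matrix.empty_val', Matrix.cons_val_fin_one, Matrix.of_apply] at this
      rw [norm_mul, hdk] at this
      rw [le_div_iff₀ hk]
      linarith
    have h10 : ‖a 1 0‖ ≤ 1 / |d₁ - d₂| := by
      have h := (entry_le_clm_norm _ 1 0).trans ha
      have he : (!![0, ((d₁:ℂ)-(d₂:ℂ)) * a 0 1; ((d₂:ℂ)-(d₁:ℂ)) * a 1 0, 0]) 1 0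
          = ((d₂:ℂ)-(d₁:ℂ)) * a 1 0 := by simp
      rw [he, norm_mul] at h
      rw [show ‖((d₂:ℂ) - (d₁:ℂ))‖ = |d₁ - d₂| by
        rw [show ((d₂:ℂ) - (d₁:ℂ)) = -(((d₁:ℂ)) - (d₂:ℂ)) by ring, norm_neg, hdk]] at h
      rw [le_div_iff₀ hk]
      linarith
    rw [trace_eq p p' hz a]
    calc ‖cm * a 1 0 + cp * a 0 1‖ ≤ ‖cm * a 1 0‖ + ‖cp * a 0 1‖ := norm_add_le _ _
      _ = (s/2) * ‖a 1 0‖ + (s/2) * ‖a 0 1‖ := by rw [norm_mul, norm_mul, hnp, hnm]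
      _ ≤ (s/2) * (1/|d₁ - d₂|) + (s/2) * (1/|d₁ - d₂|) := by
          have hs2 : (0:ℝ) ≤ s/2 := div_nonneg hs0 (by norm_num)
          have t1 := mul_le_mul_of_nonneg_left h10 hs2
          have t2 := mul_le_mul_of_nonneg_left h01 hs2
          linarith
      _ = 1 / |d₁ - d₂| * s := by ring
  · by_cases h0 : Δx = 0 ∧ Δy = 0
    · have : s = 0 := by rw [hs, h0.1, h0.2]; simp
      rw [this]
      simp
    · have hcp0 : cp ≠ 0 := by
        rw [hcp]
        simp only [div_ne_zero_iff]
        constructor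
        · intro hcon
          apply h0
          constructor
          · have := congrArg Complex.re hcon
            simpa using this
          · have := congrArg Complex.im hcon
            simpa using this
        · norm_num
      have hncp0 : (0:ℝ) < ‖cp‖ := norm_pos_iff.mpr hcp0
      set w : ℂ := (‖cp‖ : ℂ) * ((d₁:ℂ) - (d₂:ℂ)) with hw
      have hw0 : w ≠ 0 := by
        rw [hw]
        apply mul_ne_zero
        · simpa using hncp0.ne'
        · intro hcon
          apply hd
          have : ((d₁:ℂ)) = ((d₂:ℂ)) := by linear_combination hcon
          exact_mod_cast this
      set a₀ : Matrix (Fin 2) (Fin 2) ℂ :=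
        !![0, (starRingEnd ℂ) cp / w; cp / w, 0] with ha₀
      have hmem : ‖Matrix.toEuclideanCLM (𝕜 := ℂ)
          (Matrix.diagonal ![(d₁ : ℂ), (d₂ : ℂ)] * a₀
            - a₀ * Matrix.diagonal ![(d₁ : ℂ), (d₂ : ℂ)])‖ ≤ 1 := by
        rw [comm_eq_s14 d₁ d₂ a₀]
        have e01 : a₀ 0 1 = (starRingEnd ℂ) cp / w := by rw [ha₀]; simp
        have e10 : a₀ 1 0 = cp / w := by rw [ha₀]; simp
        rw [e01, e10]
        have hdk : ‖((d₁:ℂ) - (d₂:ℂ))‖ = |d₁ - d₂| := by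
          rw [show ((d₁:ℂ) - (d₂:ℂ)) = ((d₁ - d₂ : ℝ) : ℂ) by push_cast; ring,
            Complex.norm_real, Real.norm_eq_abs]
        apply clm_norm_offdiag_le
        · rw [norm_mul, norm_div, hw, norm_mul, RCLike.norm_conj]
          rw [Complex.norm_real, Real.norm_eq_abs, abs_of_pos hncp0, hdk]
          apply le_of_eq
          have habs : (0:ℝ) < ‖cp‖ := hncp0
          field_simp
        · rw [norm_mul, norm_div, hw, norm_mul]
          rw [Complex.norm_real, Real.norm_eq_abs, abs_of_pos hncp0]
          rw [show ‖((d₂:ℂ) - (d₁:ℂ))‖ = ‖((d₁:ℂ) - (d₂:ℂ))‖ by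
            rw [show ((d₂:ℂ) - (d₁:ℂ)) = -(((d₁:ℂ)) - (d₂:ℂ)) by ring, norm_neg], hdk]
          apply le_of_eq
          have habs : (0:ℝ) < ‖cp‖ := hncp0
          field_simp
      refine le_trans (le_of_eq ?_) (le_iSup _ (⟨a₀, hmem⟩ : {a : Matrix (Fin 2) (Fin 2) ℂ //
        ‖Matrix.toEuclideanCLM (𝕜 := ℂ) (Matrix.diagonal ![(d₁ : ℂ), (d₂ : ℂ)] * a
          - a * Matrix.diagonal ![(d₁ : ℂ), (d₂ : ℂ)])‖ ≤ 1}))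
      congr 1
      have e01 : a₀ 0 1 = (starRingEnd ℂ) cp / w := by rw [ha₀]; simp
      have e10 : a₀ 1 0 = cp / w := by rw [ha₀]; simp
      rw [trace_eq p p' hz a₀, e01, e10, ← hcm, ← hcp, hcm_conj]
      have hmc : cp * (starRingEnd ℂ) cp = ((‖cp‖ : ℝ) : ℂ) ^ 2 := by
        rw [Complex.mul_conj, Complex.normSq_eq_norm_sq]
        push_cast
        ring
      have hd2ne : ((d₁:ℂ) - (d₂:ℂ)) ≠ 0 := sub_ne_zero.mpr (by exact_mod_cast hd)
      have hcne : ((‖cp‖ : ℝ) : ℂ) ≠ 0 := by exact_mod_cast hncp0.ne'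
      have hval : (starRingEnd ℂ) cp * (cp / w) + cp * ((starRingEnd ℂ) cp / w)
          = ((2 * ‖cp‖ : ℝ) : ℂ) / (((d₁ - d₂ : ℝ)) : ℂ) := by
        have h1 : (starRingEnd ℂ) cp * (cp / w) + cp * ((starRingEnd ℂ) cp / w)
            = (2 * (cp * (starRingEnd ℂ) cp)) / w := by ring
        rw [h1, hmc, hw]
        rw [show (2 * (((‖cp‖:ℝ):ℂ)) ^ 2) = (((2*‖cp‖:ℝ):ℂ)) * ((‖cp‖:ℝ):ℂ) by push_cast; ring]
        rw [mul_comm ((‖cp‖:ℝ):ℂ) ((d₁:ℂ) - (d₂:ℂ))]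
        rw [mul_div_mul_right _ _ hcne]
        norm_cast
      rw [hval, norm_div, Complex.norm_real, Complex.norm_real, Real.norm_eq_abs,
        Real.norm_eq_abs, abs_of_pos (by positivity : (0:ℝ) < 2 * ‖cp‖), hnp]
      field_simp
end

section
/- With A = M₂(ℂ), D = diag(d₁, d₂), d₁ ≠ d₂, acting on ℂ²: two states of M₂(ℂ) with distinct z-coordinates z̃ ≠ z̃' (in the 3-ball parametrization) are at infinite spectral distance. -/
open scoped ENNReal

/-- For `D = diag(d₁,d₂)` with `d₁ ≠ d₂`, two states of `M₂(ℂ)` with distinct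
`z`-coordinates in the 3-ball are at infinite spectral distance. -/
theorem m2_distinct_z_distance_infinite (d₁ d₂ : ℝ) (hd : d₁ ≠ d₂) (p p' : ℝ × ℝ × ℝ)
    (hp : p.1 ^ 2 + p.2.1 ^ 2 + p.2.2 ^ 2 ≤ 1) (hp' : p'.1 ^ 2 + p'.2.1 ^ 2 + p'.2.2 ^ 2 ≤ 1)
    (hz : p.2.2 ≠ p'.2.2) :
    (⨆ a : {a : Matrix (Fin 2) (Fin 2) ℂ // ‖Matrix.toEuclideanCLM (𝕜 := ℂ)
        (Matrix.diagonal ![(d₁ : ℂ), (d₂ : ℂ)] * a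
          - a * Matrix.diagonal ![(d₁ : ℂ), (d₂ : ℂ)])‖ ≤ 1},
      ENNReal.ofReal ‖(densityMat p * (a : Matrix (Fin 2) (Fin 2) ℂ)).trace
        - (densityMat p' * (a : Matrix (Fin 2) (Fin 2) ℂ)).trace‖) = ⊤ := by
  rw [iSup_eq_top]
  intro b hb
  set c : ℝ := |p.2.2 - p'.2.2| / 2 with hc
  have hcpos : 0 < c := by
    have : p.2.2 - p'.2.2 ≠ 0 := sub_ne_zero.mpr hz
    positivity
  obtain ⟨n, hn⟩ := exists_nat_gt (b.toReal / c)
  have hcomm : Matrix.diagonal ![(d₁ : ℂ), (d₂ : ℂ)] * Matrix.diagonal ![(n : ℂ), 0]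
      - Matrix.diagonal ![(n : ℂ), 0] * Matrix.diagonal ![(d₁ : ℂ), (d₂ : ℂ)] = 0 := by
    simp [Matrix.diagonal_mul_diagonal, mul_comm]
  refine ⟨⟨Matrix.diagonal ![(n : ℂ), 0], by rw [hcomm, map_zero, norm_zero]; norm_num⟩, ?_⟩
  have htr : (densityMat p * Matrix.diagonal ![(n : ℂ), 0]).trace
      - (densityMat p' * Matrix.diagonal ![(n : ℂ), 0]).trace
      = (n : ℂ) * ((p.2.2 : ℂ) - (p'.2.2 : ℂ)) / 2 := by
    simp [densityMat, Matrix.trace, Matrix.mul_apply, Matrix.diagonal_apply, Fin.sum_univ_two,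
      Matrix.vecHead, Matrix.vecTail, Matrix.vecMul, dotProduct]
    ring
  have hnorm : ‖(densityMat p * Matrix.diagonal ![(n : ℂ), 0]).trace
      - (densityMat p' * Matrix.diagonal ![(n : ℂ), 0]).trace‖ = (n : ℝ) * c := by
    rw [htr, hc]
    rw [show ((n : ℂ) * ((p.2.2 : ℂ) - (p'.2.2 : ℂ)) / 2)
        = (((n : ℝ) * (p.2.2 - p'.2.2) / 2 : ℝ) : ℂ) by push_cast; ring]
    rw [Complex.norm_real, Real.norm_eq_abs, abs_div, abs_mul, Nat.abs_cast]
    simp [mul_div_assoc]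
  calc b < ENNReal.ofReal ((n : ℝ) * c) := by
        rw [ENNReal.lt_ofReal_iff_toReal_lt hb.ne]
        calc b.toReal = b.toReal / c * c := by field_simp
          _ < (n : ℝ) * c := by exact mul_lt_mul_of_pos_right hn hcpos
    _ = _ := by rw [hnorm]
end
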